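/- For every density operator ρ on ℂ^d, every positive integer n and every δ ≥ 0, writing Π^n = Π^n_{ρ,δ}, the operator inequalities Π^n · exp₂(−nH(ρ) − K·d·δ·√n) ≤ Π^n ρ^{⊗n} Π^n ≤ Π^n · exp₂(−nH(ρ) + K·d·δ·√n) hold (in the positive semidefinite order), where K = 2 log₂(e)/e and H(ρ) = −Tr(ρ log₂ ρ) is the von Neumann entropy. -/

import Mathlib

open Matrix BigOperators Finset
open scoped Classical ComplexOrder

noncomputable section

/-- Square complex matrices of size `d` (operators on `ℂ^d`). -/
abbrev Mat (d : ℕ) := Matrix (Fin d) (Fin d) ℂ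

/-- Operators on the `n`-fold tensor power `(ℂ^d)^{⊗n}`, indexed by `Fin n → Fin d`. -/
abbrev MatPow (d n : ℕ) := Matrix (Fin n → Fin d) (Fin n → Fin d) ℂ

/-- Tensor product `A 0 ⊗ A 1 ⊗ ⋯ ⊗ A (n-1)` of a family of `d × d` matrices. -/
def tensorPow {d n : ℕ} (A : Fin n → Mat d) : MatPow d n :=
  Matrix.of fun j k => ∏ i, A i (j i) (k i)

/-- Exponential to base 2. -/
def exp2 (t : ℝ) : ℝ := (2 : ℝ) ^ t

/-- `P` is a probability distribution on the finite set `X`. -/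
def IsProbDist {X : Type*} [Fintype X] (P : X → ℝ) : Prop :=
  (∀ x, 0 ≤ P x) ∧ ∑ x, P x = 1

/-- `ρ` is a density operator (a state): positive semidefinite with trace one. -/
def IsState {ι : Type*} [Fintype ι] [DecidableEq ι] (ρ : Matrix ι ι ℂ) : Prop :=
  ρ.PosSemidef ∧ ρ.trace = 1

/-- `N(x|x^n)`: number of occurrences of the letter `x` in the sequence `xs`. -/
def countIn {X : Type*} {n : ℕ} (x : X) (xs : Fin n → X) : ℕ :=
  (Finset.univ.filter fun i => xs i = x).card

/-- The variance-typical set `T^n_{P,δ}`. -/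
def typicalSet {X : Type*} [Fintype X] (n : ℕ) (P : X → ℝ) (δ : ℝ) :
    Finset (Fin n → X) :=
  Finset.univ.filter fun xs => ∀ x : X,
    |(countIn x xs : ℝ) - n * P x| ≤ δ * Real.sqrt n * Real.sqrt (P x * (1 - P x))

/-- Product (i.i.d.) probability `P^{⊗n}(A)` of a set `A` of sequences. -/
def prodProb {X : Type*} [Fintype X] {n : ℕ} (P : X → ℝ) (A : Finset (Fin n → X)) : ℝ :=
  ∑ xs ∈ A, ∏ i, P (xs i)

/-- Shannon entropy to base 2. -/
def shannonEntropy {X : Type*} [Fintype X] (P : X → ℝ) : ℝ :=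
  -∑ x, P x * Real.logb 2 (P x)

/-- von Neumann entropy to base 2, `H(ρ) = -Tr(ρ log₂ ρ)`, via the eigenvalues. -/
def vnEntropy {d : ℕ} (ρ : Mat d) : ℝ :=
  if h : ρ.IsHermitian then -∑ i, h.eigenvalues i * Real.logb 2 (h.eigenvalues i) else 0

/-- The constant `K = 2 log₂(e) / e`. -/
def Kconst : ℝ := 2 * Real.logb 2 (Real.exp 1) / Real.exp 1

/-- A diagonalization `ρ = Σ_j R j • π j` into one-dimensional mutually orthogonal
eigenprojectors, with eigenvalue list `R` a probability distribution. -/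
def IsDiagonalization {d : ℕ} (ρ : Mat d) (R : Fin d → ℝ) (π : Fin d → Mat d) : Prop :=
  (∀ j, (π j).PosSemidef) ∧ (∀ j, π j * π j = π j) ∧ (∀ j, (π j).trace = 1) ∧
    (∀ j k, j ≠ k → π j * π k = 0) ∧ (∑ j, π j = 1) ∧
    ρ = ∑ j, (R j : ℂ) • π j ∧ IsProbDist R

/-- The variance-typical projector `Π^n_{ρ,δ}` of a state with fixed diagonalization
`(R, π)`. -/
def typicalProj {d : ℕ} (n : ℕ) (R : Fin d → ℝ) (π : Fin d → Mat d) (δ : ℝ) : MatPow d n :=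
  ∑ js ∈ typicalSet n R δ, tensorPow fun i => π (js i)

/-- `B` is an `η`-shadow of the state `σ`: `0 ≤ B ≤ 1` and `Tr(σB) ≥ η`. -/
def IsShadow {ι : Type*} [Fintype ι] [DecidableEq ι] (σ B : Matrix ι ι ℂ) (η : ℝ) : Prop :=
  B.PosSemidef ∧ ((1 : Matrix ι ι ℂ) - B).PosSemidef ∧ η ≤ (Matrix.trace (σ * B)).re

/-- Average state `PW = Σ_x P(x) W_x` of a cq-channel under input distribution `P`. -/
def avgState {X : Type*} [Fintype X] {d : ℕ} (P : X → ℝ) (W : X → Mat d) : Mat d :=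
  ∑ x, (P x : ℂ) • W x

/-- Conditional von Neumann entropy `H(W|P) = Σ_x P(x) H(W_x)`. -/
def condEntropy {X : Type*} [Fintype X] {d : ℕ} (P : X → ℝ) (W : X → Mat d) : ℝ :=
  ∑ x, P x * vnEntropy (W x)

/-- Mutual information `I(P;W) = H(PW) − H(W|P)`. -/
def mutualInfo {X : Type*} [Fintype X] {d : ℕ} (P : X → ℝ) (W : X → Mat d) : ℝ :=
  vnEntropy (avgState P W) - condEntropy P W

/-- Capacity `C(W) = max_P I(P;W)`. -/
def capacity {X : Type*} [Fintype X] {d : ℕ} (W : X → Mat d) : ℝ :=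
  sSup {c | ∃ P : X → ℝ, IsProbDist P ∧ c = mutualInfo P W}

/-- `(f, D)` (with message set `M` inside the outcome index set `M'`) is an
`(n,λ)`-code for the cq-channel `W`: the `D m` are positive semidefinite, sum to the
identity, and each message is decoded correctly with probability at least `1 - λ`. -/
def IsCode {X : Type*} [Fintype X] {d n : ℕ} (W : X → Mat d) (lam : ℝ)
    {M' : Type*} [Fintype M'] (M : Finset M') (f : M' → Fin n → X)
    (D : M' → MatPow d n) : Prop :=
  (∀ m, (D m).PosSemidef) ∧ (∑ m, D m = 1) ∧
    ∀ m ∈ M, 1 - lam ≤ (Matrix.trace (tensorPow (fun i => W (f m i)) * D m)).re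

/-- `N(n,λ)`: maximal size of an `(n,λ)`-code for `W`. -/
def maxCodeSize {X : Type*} [Fintype X] (d : ℕ) (W : X → Mat d) (n : ℕ) (lam : ℝ) : ℕ :=
  sSup {k | ∃ (M' : Type) (_ : Fintype M') (M : Finset M') (f : M' → Fin n → X)
    (D : M' → MatPow d n), IsCode W lam M f D ∧ M.card = k}

/-- Trace norm `‖A‖₁ = Tr|A|`: the sum of the singular values. -/
def traceNorm {ι : Type*} [Fintype ι] [DecidableEq ι] (A : Matrix ι ι ℂ) : ℝ :=
  ∑ i, Real.sqrt ((Matrix.posSemidef_conjTranspose_mul_self A).1.eigenvalues i)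

/-- Trace distance `D(ρ,σ) = ½‖ρ−σ‖₁`. -/
def traceDist {ι : Type*} [Fintype ι] [DecidableEq ι] (ρ σ : Matrix ι ι ℂ) : ℝ :=
  traceNorm (ρ - σ) / 2

/-- (Pure-state) fidelity `F(ρ,σ) = Tr(ρσ)`. -/
def fidelity {ι : Type*} [Fintype ι] [DecidableEq ι] (ρ σ : Matrix ι ι ℂ) : ℝ :=
  (Matrix.trace (ρ * σ)).re

/-- A pure state: the rank-one orthogonal projector `|ψ⟩⟨ψ|` onto the span of a
unit vector `ψ`. -/
def IsPureState {ι : Type*} [Fintype ι] (ρ : Matrix ι ι ℂ) : Prop :=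
  ∃ ψ : ι → ℂ, (∑ i, star (ψ i) * ψ i) = 1 ∧ ρ = Matrix.vecMulVec ψ (star ψ)

/-- The set of eigenvalue-index sequences `js` that are variance-typical, with
constant `δ`, for the distribution `q x` on each block `I_x = {i : xs i = x}`. -/
def condTypicalSet {X : Type*} [Fintype X] {n d : ℕ} (xs : Fin n → X)
    (q : X → Fin d → ℝ) (δ : ℝ) : Finset (Fin n → Fin d) :=
  Finset.univ.filter fun js => ∀ (x : X) (k : Fin d),
    |((Finset.univ.filter fun i => xs i = x ∧ js i = k).card : ℝ) - (countIn x xs : ℝ) * q x k|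
      ≤ δ * Real.sqrt (countIn x xs) * Real.sqrt (q x k * (1 - q x k))

/-- Conditional variance-typical projector `Π^n_{W,δ}(x^n) = ⊗_{x∈X} Π^{I_x}_{W_x,δ}`,
with respect to fixed diagonalizations `W_x = Σ_j (q x j) • (π x j)`. -/
def condTypicalProj {X : Type*} [Fintype X] {d : ℕ} {n : ℕ} (xs : Fin n → X)
    (q : X → Fin d → ℝ) (π : X → Fin d → Mat d) (δ : ℝ) : MatPow d n :=
  ∑ js ∈ condTypicalSet xs q δ, tensorPow fun i => π (xs i) (js i)

lemma tensorPow_mul {d n : ℕ} (A B : Fin n → Mat d) :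
    tensorPow A * tensorPow B = tensorPow fun i => A i * B i := by
  ext j k
  simp only [tensorPow, Matrix.mul_apply, Matrix.of_apply]
  rw [Finset.prod_univ_sum (fun _ : Fin n => (Finset.univ : Finset (Fin d)))
    (fun i m => A i (j i) m * B i m (k i))]
  rw [Fintype.piFinset_univ]
  exact Finset.sum_congr rfl fun l _ => (Finset.prod_mul_distrib).symm

lemma tensorPow_conjTranspose {d n : ℕ} (A : Fin n → Mat d) :
    (tensorPow A)ᴴ = tensorPow fun i => (A i)ᴴ := by
  ext j k
  simp [tensorPow, Matrix.conjTranspose_apply, star_prod]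

lemma tensorPow_eq_zero {d n : ℕ} (A : Fin n → Mat d) (i0 : Fin n) (h : A i0 = 0) :
    tensorPow A = 0 := by
  ext j k
  simp only [tensorPow, Matrix.of_apply, Matrix.zero_apply]
  exact Finset.prod_eq_zero (Finset.mem_univ i0) (by simp [h])

lemma tensorPow_expand {d n : ℕ} (R : Fin d → ℝ) (π : Fin d → Mat d) :
    tensorPow (fun _ : Fin n => ∑ j, (R j : ℂ) • π j)
      = ∑ js : Fin n → Fin d, ((∏ i, R (js i) : ℝ) : ℂ) • tensorPow fun i => π (js i) := by
  ext j k
  simp only [tensorPow, Matrix.of_apply, Matrix.sum_apply, Matrix.smul_apply,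
    smul_eq_mul]
  rw [Finset.prod_univ_sum (fun _ : Fin n => (Finset.univ : Finset (Fin d)))
    (fun i m => (R m : ℂ) * π m (j i) (k i))]
  rw [Fintype.piFinset_univ]
  refine Finset.sum_congr rfl fun js _ => ?_
  rw [Finset.prod_mul_distrib]
  push_cast
  ring

lemma psd_smul {ι : Type*} [Fintype ι] [DecidableEq ι] {A : Matrix ι ι ℂ}
    (hA : A.PosSemidef) {c : ℝ} (hc : 0 ≤ c) : ((c : ℂ) • A).PosSemidef := by
  constructor
  · unfold Matrix.IsHermitian
    rw [Matrix.conjTranspose_smul, hA.1]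
    congr 1
    simp [Complex.star_def, Complex.conj_ofReal]
  · intro x
    have h1 := hA.2 x
    exact (hA.smul (show (0:ℂ) ≤ (c:ℂ) by exact_mod_cast hc)).2 x

lemma psd_sum {ι κ : Type*} [Fintype ι] [DecidableEq ι] (s : Finset κ)
    (F : κ → Matrix ι ι ℂ) (h : ∀ x ∈ s, (F x).PosSemidef) :
    (∑ x ∈ s, F x).PosSemidef :=
  Finset.sum_induction F _ (fun _ _ ha hb => ha.add hb) Matrix.PosSemidef.zero h

section ProjAux
variable {d n : ℕ} (R : Fin d → ℝ) (π : Fin d → Mat d)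
  (hidem : ∀ j, π j * π j = π j) (horth : ∀ j k, j ≠ k → π j * π k = 0)
include hidem horth
lemma P_mul_P (a b : Fin n → Fin d) :
    (tensorPow fun i => π (a i)) * (tensorPow fun i => π (b i))
      = if a = b then (tensorPow fun i => π (a i)) else 0 := by
  rw [tensorPow_mul]
  by_cases h : a = b
  · subst h; simp only [if_pos rfl]
    exact congrArg tensorPow (funext fun i => hidem (a i))
  · rw [if_neg h]
    obtain ⟨i0, hi0⟩ : ∃ i, a i ≠ b i := by
      by_contra hc; push_neg at hc; exact h (funext hc)
    exact tensorPow_eq_zero _ i0 (horth _ _ hi0)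

lemma proj_mul_P (δ : ℝ) (b : Fin n → Fin d) :
    typicalProj n R π δ * (tensorPow fun i => π (b i))
      = if b ∈ typicalSet n R δ then (tensorPow fun i => π (b i)) else 0 := by
  rw [typicalProj, Finset.sum_mul]
  rw [Finset.sum_congr rfl fun a _ => P_mul_P π hidem horth a b]
  simp [Finset.sum_ite_eq]

lemma P_mul_proj (δ : ℝ) (a : Fin n → Fin d) :
    (tensorPow fun i => π (a i)) * typicalProj n R π δ
      = if a ∈ typicalSet n R δ then (tensorPow fun i => π (a i)) else 0 := by
  rw [typicalProj, Finset.mul_sum]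
  rw [Finset.sum_congr rfl fun b _ => P_mul_P π hidem horth a b]
  simp [Finset.sum_ite_eq']

lemma sandwich_eq (δ : ℝ) :
    typicalProj n R π δ * tensorPow (fun _ : Fin n => ∑ j, (R j : ℂ) • π j)
        * typicalProj n R π δ
      = ∑ js ∈ typicalSet n R δ,
          ((∏ i, R (js i) : ℝ) : ℂ) • tensorPow fun i => π (js i) := by
  rw [tensorPow_expand, Finset.mul_sum, Finset.sum_mul]
  have h2 : ∀ js : Fin n → Fin d,
      typicalProj n R π δ * (((∏ i, R (js i) : ℝ) : ℂ) • tensorPow fun i => π (js i))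
        * typicalProj n R π δ
      = if js ∈ typicalSet n R δ then
          ((∏ i, R (js i) : ℝ) : ℂ) • tensorPow fun i => π (js i) else 0 := by
    intro js
    by_cases h : js ∈ typicalSet n R δ
    · rw [Matrix.mul_smul, Matrix.smul_mul, proj_mul_P R π hidem horth, if_pos h,
        P_mul_proj R π hidem horth, if_pos h, if_pos h]
    · rw [Matrix.mul_smul, Matrix.smul_mul, proj_mul_P R π hidem horth, if_neg h,
        if_neg h]
      simp
  rw [Finset.sum_congr rfl fun js _ => h2 js]
  simp [Finset.sum_ite_mem]
end ProjAux

section PolyAux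
open Polynomial
lemma Kconst_eq : Kconst = 2 / (Real.exp 1 * Real.log 2) := by
  rw [Kconst, Real.logb, Real.log_exp]
  field_simp

lemma mul_neg_log_le {x : ℝ} (hx : 0 < x) : x * (-Real.log x) ≤ 1 / Real.exp 1 := by
  have h1 : Real.log x⁻¹ ≤ x⁻¹ / Real.exp 1 := by
    have h2 : Real.log (x⁻¹ / Real.exp 1) ≤ x⁻¹ / Real.exp 1 - 1 :=
      Real.log_le_sub_one_of_pos (by positivity)
    rw [Real.log_div (by positivity) (Real.exp_ne_zero 1), Real.log_exp] at h2
    linarith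
  rw [Real.log_inv] at h1
  calc x * (-Real.log x) ≤ x * (x⁻¹ / Real.exp 1) := by
        apply mul_le_mul_of_nonneg_left h1 hx.le
    _ = 1 / Real.exp 1 := by field_simp

lemma key_ineq {p : ℝ} (h0 : 0 ≤ p) (h1 : p ≤ 1) :
    Real.sqrt (p * (1 - p)) * |Real.logb 2 p| ≤ Kconst := by
  have hK : (0:ℝ) < 2 / (Real.exp 1 * Real.log 2) := by
    have := Real.log_pos (by norm_num : (1:ℝ) < 2)
    positivity
  rcases eq_or_lt_of_le h0 with h|hp
  · rw [← h]
    rw [Kconst_eq]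
    simpa [Real.logb] using hK.le
  rw [Kconst_eq]
  have hs1 : Real.sqrt (p * (1 - p)) ≤ Real.sqrt p := by
    apply Real.sqrt_le_sqrt
    nlinarith
  have habs : |Real.logb 2 p| = -Real.logb 2 p := by
    rw [abs_of_nonpos (Real.logb_nonpos (by norm_num) h0 h1)]
  have hlog2 : (0:ℝ) < Real.log 2 := Real.log_pos (by norm_num)
  have hsq : Real.sqrt p * (-Real.log p) ≤ 2 / Real.exp 1 := by
    have hsp : 0 < Real.sqrt p := Real.sqrt_pos.2 hp
    have := mul_neg_log_le hsp
    rw [Real.log_sqrt h0] at this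
    have h2 : Real.sqrt p * (-(Real.log p / 2)) ≤ 1 / Real.exp 1 := this
    have h3 : Real.sqrt p * (-Real.log p) = 2 * (Real.sqrt p * (-(Real.log p / 2))) := by ring
    rw [h3]
    rw [div_eq_mul_inv, div_eq_mul_inv] at *
    nlinarith [Real.exp_pos 1]
  have hnl : 0 ≤ -Real.logb 2 p := neg_nonneg.2 (Real.logb_nonpos (by norm_num) h0 h1)
  calc Real.sqrt (p * (1 - p)) * |Real.logb 2 p|
      ≤ Real.sqrt p * (-Real.logb 2 p) := by
        rw [habs]; exact mul_le_mul_of_nonneg_right hs1 hnl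
    _ = (Real.sqrt p * (-Real.log p)) / Real.log 2 := by
        rw [Real.logb]; ring
    _ ≤ (2 / Real.exp 1) / Real.log 2 := by
        exact (div_le_div_iff_of_pos_right hlog2).mpr hsq
    _ = 2 / (Real.exp 1 * Real.log 2) := by field_simp

lemma exp2_pos (t : ℝ) : 0 < exp2 t := Real.rpow_pos_of_pos (by norm_num) t

lemma exp2_le_exp2 {s t : ℝ} (h : s ≤ t) : exp2 s ≤ exp2 t :=
  Real.rpow_le_rpow_of_exponent_le (by norm_num) h

lemma exp2_sum {κ : Type*} (s : Finset κ) (f : κ → ℝ) :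
    exp2 (∑ j ∈ s, f j) = ∏ j ∈ s, exp2 (f j) := by
  unfold exp2
  exact Real.rpow_sum_of_pos (by norm_num) f s

lemma prod_bound {d n : ℕ} {R : Fin d → ℝ} (hR : IsProbDist R) {δ : ℝ} (hδ : 0 ≤ δ)
    {js : Fin n → Fin d} (hjs : js ∈ typicalSet n R δ) :
    exp2 (-((n:ℝ) * (-∑ j, R j * Real.logb 2 (R j))) - Kconst * d * δ * Real.sqrt n)
        ≤ ∏ i, R (js i) ∧
      ∏ i, R (js i)
        ≤ exp2 (-((n:ℝ) * (-∑ j, R j * Real.logb 2 (R j))) + Kconst * d * δ * Real.sqrt n) := by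
  obtain ⟨hR0, hR1⟩ := hR
  have htyp : ∀ j : Fin d, |(countIn j js : ℝ) - n * R j|
      ≤ δ * Real.sqrt n * Real.sqrt (R j * (1 - R j)) := by
    intro j
    simp only [typicalSet, Finset.mem_filter] at hjs
    exact hjs.2 j
  have hRle1 : ∀ j, R j ≤ 1 := by
    intro j
    rw [← hR1]
    exact Finset.single_le_sum (fun k _ => hR0 k) (Finset.mem_univ j)
  have hz : ∀ j, R j = 0 → countIn j js = 0 := by
    intro j hj
    have := htyp j
    rw [hj] at this
    simp only [mul_zero, zero_mul, Real.sqrt_zero, mul_zero, sub_zero, zero_sub, zero_mul] at this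
    have : |(countIn j js : ℝ)| ≤ 0 := by simpa using this
    have := abs_nonpos_iff.mp this
    exact_mod_cast this
  -- group the product
  have hgroup : ∏ i, R (js i) = ∏ j, R j ^ countIn j js := by
    rw [← Finset.prod_fiberwise' Finset.univ js R]
    refine Finset.prod_congr rfl fun j _ => ?_
    rw [Finset.prod_const]
    congr!
    rw [countIn]
    exact Finset.card_bij (fun a _ => a) (fun a ha => by simpa using ha)
      (fun a b _ _ h => h) (fun b hb => ⟨b, by simpa using hb, rfl⟩)
  -- equality with exp2 of exponent
  have hexp : ∏ i, R (js i) = exp2 (∑ j, (countIn j js : ℝ) * Real.logb 2 (R j)) := by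
    rw [hgroup, exp2_sum]
    refine Finset.prod_congr rfl fun j _ => ?_
    rcases eq_or_lt_of_le (hR0 j) with h|h
    · rw [hz j h.symm, ← h]
      simp [exp2]
    · rw [exp2, mul_comm, Real.rpow_mul_natCast (by norm_num : (0:ℝ) ≤ 2),
        Real.rpow_logb (by norm_num) (by norm_num) h]
  -- bound the exponent
  have hEbound : |∑ j, ((countIn j js : ℝ) - n * R j) * Real.logb 2 (R j)|
      ≤ Kconst * d * δ * Real.sqrt n := by
    calc |∑ j, ((countIn j js : ℝ) - n * R j) * Real.logb 2 (R j)|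
        ≤ ∑ j, |((countIn j js : ℝ) - n * R j) * Real.logb 2 (R j)| :=
          Finset.abs_sum_le_sum_abs _ _
      _ ≤ ∑ _j : Fin d, Kconst * δ * Real.sqrt n := by
          refine Finset.sum_le_sum fun j _ => ?_
          rw [abs_mul]
          calc |(countIn j js : ℝ) - n * R j| * |Real.logb 2 (R j)|
              ≤ (δ * Real.sqrt n * Real.sqrt (R j * (1 - R j))) * |Real.logb 2 (R j)| := by
                apply mul_le_mul_of_nonneg_right (htyp j) (abs_nonneg _)
            _ = (δ * Real.sqrt n) * (Real.sqrt (R j * (1 - R j)) * |Real.logb 2 (R j)|) := by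
                ring
            _ ≤ (δ * Real.sqrt n) * Kconst := by
                apply mul_le_mul_of_nonneg_left (key_ineq (hR0 j) (hRle1 j))
                positivity
            _ = Kconst * δ * Real.sqrt n := by ring
      _ = Kconst * d * δ * Real.sqrt n := by
          rw [Finset.sum_const, Finset.card_univ, Fintype.card_fin, nsmul_eq_mul]
          ring
  have hsplit : ∑ j, (countIn j js : ℝ) * Real.logb 2 (R j)
      = -((n:ℝ) * (-∑ j, R j * Real.logb 2 (R j)))
        + ∑ j, ((countIn j js : ℝ) - n * R j) * Real.logb 2 (R j) := by
    have hh : -((n:ℝ) * (-∑ j, R j * Real.logb 2 (R j)))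
        = ∑ j, (n:ℝ) * (R j * Real.logb 2 (R j)) := by
      rw [mul_neg, neg_neg, Finset.mul_sum]
    rw [hh, ← Finset.sum_add_distrib]
    refine Finset.sum_congr rfl fun j _ => ?_
    ring
  rw [hexp]
  constructor
  · apply exp2_le_exp2
    rw [hsplit]
    have := abs_le.1 hEbound
    linarith [this.1]
  · apply exp2_le_exp2
    rw [hsplit]
    have := abs_le.1 hEbound
    linarith [this.2]

lemma psd_trace_zero {d : ℕ} (Q : Mat d) (hherm : Q.IsHermitian) (hidem : Q * Q = Q)
    (htr : Q.trace = 0) : Q = 0 := by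
  have h1 : Q.trace = ((∑ l, ∑ i, Complex.normSq (Q i l) : ℝ) : ℂ) := by
    conv_lhs => rw [← hidem]
    rw [Matrix.trace]
    push_cast
    refine Finset.sum_congr rfl fun l _ => ?_
    rw [Matrix.diag, Matrix.mul_apply]
    refine Finset.sum_congr rfl fun i _ => ?_
    rw [show Q l i = star (Q i l) by rw [← Matrix.conjTranspose_apply, hherm]]
    rw [Complex.star_def, ← Complex.normSq_eq_conj_mul_self]
  rw [htr] at h1
  have h2 : (∑ l, ∑ i, Complex.normSq (Q i l) : ℝ) = 0 := by exact_mod_cast h1.symm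
  ext i l
  have h3 : ∀ l ∈ Finset.univ, ∀ i ∈ Finset.univ, Complex.normSq (Q i l) = 0 := by
    have := (Finset.sum_eq_zero_iff_of_nonneg (fun l _ =>
      Finset.sum_nonneg fun i _ => Complex.normSq_nonneg _)).1 h2
    intro l hl i hi
    exact (Finset.sum_eq_zero_iff_of_nonneg fun i _ => Complex.normSq_nonneg _).1
      (this l hl) i hi
  simpa using Complex.normSq_eq_zero.1 (h3 l (Finset.mem_univ l) i (Finset.mem_univ i))

/-- A Hermitian idempotent with trace 1 is a rank-one projector `v v*`. -/

lemma rank_one_of_proj {d : ℕ} (π : Mat d) (hherm : π.IsHermitian)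
    (hidem : π * π = π) (htr : π.trace = 1) :
    ∃ v : Fin d → ℂ, π = Matrix.vecMulVec v (star v) := by
  have hconj : ∀ i l, star (π i l) = π l i := by
    intro i l
    rw [← Matrix.conjTranspose_apply, hherm]
  have hdiag : ∀ k, π k k = ((∑ m, Complex.normSq (π m k) : ℝ) : ℂ) := by
    intro k
    conv_lhs => rw [← hidem]
    rw [Matrix.mul_apply]
    push_cast
    refine Finset.sum_congr rfl fun m _ => ?_
    rw [show π k m = star (π m k) from (hconj m k).symm]
    rw [Complex.star_def, ← Complex.normSq_eq_conj_mul_self]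
  have htr' : ∑ k, π k k = 1 := htr
  obtain ⟨k, hk⟩ : ∃ k, π k k ≠ 0 := by
    by_contra hc
    push_neg at hc
    rw [Finset.sum_congr rfl fun k _ => hc k] at htr'
    simp at htr'
  set s : ℝ := ∑ m, Complex.normSq (π m k) with hs
  have hspos : 0 < s := by
    rcases lt_or_eq_of_le (Finset.sum_nonneg fun m _ => Complex.normSq_nonneg (π m k)) with h|h
    · exact h
    · exact absurd (by rw [hdiag k, ← h]; norm_num) hk
  set v : Fin d → ℂ := fun i => π i k / (Real.sqrt s : ℂ) with hv
  have hW : ∀ i l, Matrix.vecMulVec v (star v) i l = π i k * π k l / (s : ℂ) := by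
    intro i l
    rw [Matrix.vecMulVec_apply]
    simp only [hv, Pi.star_apply, star_div₀, hconj]
    rw [show star ((Real.sqrt s : ℝ) : ℂ) = ((Real.sqrt s : ℝ) : ℂ) by
      rw [Complex.star_def, Complex.conj_ofReal]]
    rw [div_mul_div_comm, ← Complex.ofReal_mul, Real.mul_self_sqrt hspos.le]
  set W := Matrix.vecMulVec v (star v) with hWdef
  have hπkk : π k k = (s : ℂ) := hdiag k
  have hsne : (s : ℂ) ≠ 0 := by exact_mod_cast hspos.ne'
  have hπW : π * W = W := by
    ext i l
    rw [Matrix.mul_apply, hW]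
    rw [Finset.sum_congr rfl fun m _ => by rw [hW m l]]
    have : ∑ m, π i m * (π m k * π k l / (s:ℂ)) = (∑ m, π i m * π m k) * (π k l / (s:ℂ)) := by
      rw [Finset.sum_mul]; exact Finset.sum_congr rfl fun m _ => by ring
    rw [this, ← Matrix.mul_apply, hidem, mul_div_assoc]
  have hWπ : W * π = W := by
    ext i l
    rw [Matrix.mul_apply, hW]
    rw [Finset.sum_congr rfl fun m _ => by rw [hW i m]]
    have : ∑ m, π i k * π k m / (s:ℂ) * π m l = (π i k / (s:ℂ)) * ∑ m, π k m * π m l := by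
      rw [Finset.mul_sum]; exact Finset.sum_congr rfl fun m _ => by ring
    rw [this, ← Matrix.mul_apply, hidem]
    ring
  have hWW : W * W = W := by
    ext i l
    rw [Matrix.mul_apply, hW]
    rw [Finset.sum_congr rfl fun m _ => by rw [hW i m, hW m l]]
    have : ∑ m, (π i k * π k m / (s:ℂ)) * (π m k * π k l / (s:ℂ))
        = (π i k * π k l / (s:ℂ)) * ((∑ m, π k m * π m k) / (s:ℂ)) := by
      rw [Finset.sum_div, Finset.mul_sum]
      exact Finset.sum_congr rfl fun m _ => by ring
    rw [this, ← Matrix.mul_apply, hidem, hπkk, div_self hsne, mul_one]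
  have htrW : W.trace = 1 := by
    have h1 : W.trace = ∑ i, π i k * π k i / (s:ℂ) :=
      Finset.sum_congr rfl fun i _ => hW i i
    rw [h1, ← Finset.sum_div]
    rw [show (∑ i, π i k * π k i) = ∑ i, π k i * π i k from
      Finset.sum_congr rfl fun i _ => mul_comm _ _]
    rw [← Matrix.mul_apply, hidem, hπkk, div_self hsne]
  have hWherm : W.IsHermitian := by
    ext i l
    rw [Matrix.conjTranspose_apply, hW, hW]
    rw [star_div₀, star_mul', hconj, hconj]
    rw [show star ((s : ℝ) : ℂ) = ((s:ℝ):ℂ) by rw [Complex.star_def, Complex.conj_ofReal]]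
    ring
  have hQ : π - W = 0 := by
    apply psd_trace_zero
    · exact hherm.sub hWherm
    · rw [sub_mul, mul_sub, mul_sub, hidem, hπW, hWπ, hWW]
      abel
    · rw [Matrix.trace_sub, htr, htrW, sub_self]
  exact ⟨v, by rw [← sub_eq_zero]; exact hQ⟩

lemma det_conj_unitary {d : ℕ} (V D : Mat d) (hVV : Vᴴ * V = 1) (t : ℂ) :
    Matrix.det (t • (1 : Mat d) - V * D * Vᴴ) = Matrix.det (t • (1 : Mat d) - D) := by
  have hVV' : V * Vᴴ = 1 := mul_eq_one_comm.mp hVV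
  have key : t • (1 : Mat d) - V * D * Vᴴ = V * (t • (1 : Mat d) - D) * Vᴴ := by
    rw [Matrix.mul_sub, Matrix.sub_mul]
    congr 1
    rw [Matrix.mul_smul, Matrix.mul_one, Matrix.smul_mul, hVV']
  rw [key, Matrix.det_mul, Matrix.det_mul]
  have hdet : Matrix.det Vᴴ * Matrix.det V = 1 := by
    rw [← Matrix.det_mul, hVV, Matrix.det_one]
  calc Matrix.det V * Matrix.det (t • (1:Mat d) - D) * Matrix.det Vᴴ
      = Matrix.det (t • (1:Mat d) - D) * (Matrix.det Vᴴ * Matrix.det V) := by ring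
    _ = Matrix.det (t • (1:Mat d) - D) := by rw [hdet, mul_one]

lemma det_smul_one_sub_diagonal {d : ℕ} (f : Fin d → ℂ) (t : ℂ) :
    Matrix.det (t • (1 : Mat d) - Matrix.diagonal f) = ∏ j, (t - f j) := by
  have : t • (1 : Mat d) - Matrix.diagonal f = Matrix.diagonal (fun j => t - f j) := by
    ext i j
    by_cases h : i = j <;>
      simp [Matrix.diagonal_apply, Matrix.one_apply, h]
  rw [this, Matrix.det_diagonal]

/-- If `ρ` is Hermitian and also equals `V diag(R) Vᴴ` for a unitary `V`, then for any
`f : ℝ → ℝ`, `∑ f(eigenvalues) = ∑ f (R j)`. -/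

lemma sum_f_eigenvalues {d : ℕ} (ρ : Mat d) (hherm : ρ.IsHermitian)
    (R : Fin d → ℝ) (V : Mat d) (hVV : Vᴴ * V = 1)
    (hρ : ρ = V * Matrix.diagonal (fun j => (R j : ℂ)) * Vᴴ) (f : ℝ → ℝ) :
    ∑ i, f (hherm.eigenvalues i) = ∑ j, f (R j) := by
  set lam := hherm.eigenvalues with hlam
  -- unitary from the spectral theorem
  have hspec := hherm.spectral_theorem
  set U : Mat d := (hherm.eigenvectorUnitary : Mat d) with hU
  have hUU : Uᴴ * U = 1 := by
    rw [← Matrix.star_eq_conjTranspose]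
    exact Unitary.coe_star_mul_self hherm.eigenvectorUnitary
  -- the two characteristic products agree at every point
  have hdet : ∀ t : ℂ, ∏ j, (t - (R j : ℂ)) = ∏ i, (t - (lam i : ℂ)) := by
    intro t
    have h1 : Matrix.det (t • (1 : Mat d) - ρ) = ∏ j, (t - (R j : ℂ)) := by
      rw [hρ, det_conj_unitary _ _ hVV, det_smul_one_sub_diagonal]
    have h2 : Matrix.det (t • (1 : Mat d) - ρ) = ∏ i, (t - (lam i : ℂ)) := by
      conv_lhs => rw [hspec]
      rw [Unitary.conjStarAlgAut_apply, Matrix.star_eq_conjTranspose, det_conj_unitary _ _ hUU,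
        det_smul_one_sub_diagonal]
      rfl
    rw [← h1, h2]
  -- convert to polynomial identity and compare roots
  have hpoly : ((Finset.univ.val.map fun j => ((R j : ℂ))).map (fun a => X - C a)).prod
      = ((Finset.univ.val.map fun i => ((lam i : ℂ))).map (fun a => X - C a)).prod := by
    apply Polynomial.funext
    intro t
    rw [Polynomial.eval_multiset_prod, Polynomial.eval_multiset_prod]
    simp only [Multiset.map_map, Function.comp]
    have : ∀ (g : Fin d → ℂ), (Finset.univ.val.map fun j => eval t (X - C (g j))).prod
        = ∏ j, (t - g j) := by
      intro g
      rw [Finset.prod_eq_multiset_prod]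
      congr 1
      refine Multiset.map_congr rfl fun j _ => by simp
    rw [this, this, hdet]
  have hroots := congrArg Polynomial.roots hpoly
  rw [Polynomial.roots_multiset_prod_X_sub_C, Polynomial.roots_multiset_prod_X_sub_C] at hroots
  -- strip the coercion to ℂ
  have hmult : Finset.univ.val.map R = Finset.univ.val.map lam := by
    apply Multiset.map_injective (Complex.ofReal_injective)
    rw [Multiset.map_map, Multiset.map_map]
    exact hroots
  -- conclude
  calc ∑ i, f (lam i) = ((Finset.univ.val.map lam).map f).sum := by
        rw [Multiset.map_map]; rfl
    _ = ((Finset.univ.val.map R).map f).sum := by rw [hmult]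
    _ = ∑ j, f (R j) := by rw [Multiset.map_map]; rfl
end PolyAux

/-- **Lemma 2, part 2 (Typical projector, operator sandwich).** Writing `Π^n = Π^n_{ρ,δ}`,
`Π^n exp₂(−nH(ρ) − Kdδ√n) ≤ Π^n ρ^{⊗n} Π^n ≤ Π^n exp₂(−nH(ρ) + Kdδ√n)`
in the positive semidefinite order, with `K = 2 log₂(e)/e`. -/
theorem typicalProj_sandwich {d : ℕ} (ρ : Mat d) (hρ : IsState ρ)
    (R : Fin d → ℝ) (π : Fin d → Mat d) (hdiag : IsDiagonalization ρ R π)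
    (n : ℕ) (hn : 0 < n) (δ : ℝ) (hδ : 0 ≤ δ) :
    (typicalProj n R π δ * tensorPow (fun _ : Fin n => ρ) * typicalProj n R π δ -
        ((exp2 (-((n : ℝ) * vnEntropy ρ) - Kconst * d * δ * Real.sqrt n) : ℝ) : ℂ) •
          typicalProj n R π δ).PosSemidef ∧
      (((exp2 (-((n : ℝ) * vnEntropy ρ) + Kconst * d * δ * Real.sqrt n) : ℝ) : ℂ) •
          typicalProj n R π δ -
        typicalProj n R π δ * tensorPow (fun _ : Fin n => ρ) * typicalProj n R π δ).PosSemidef := by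
  obtain ⟨hpsd, htrρ⟩ := hρ
  obtain ⟨hπpsd, hidem, htrπ, horth, hsum1, hρeq, hprob⟩ := hdiag
  have hherm : ρ.IsHermitian := hpsd.1
  -- extract unit vectors from the rank-one projectors
  choose v hv using fun j => rank_one_of_proj (π j) ((hπpsd j).1) (hidem j) (htrπ j)
  have hnorm : ∀ j, ∑ i, v j i * star (v j i) = 1 := by
    intro j
    have h := htrπ j
    rw [hv j] at h
    simpa [Matrix.trace, Matrix.diag, Matrix.vecMulVec_apply] using h
  have hvne : ∀ j, ∃ i, v j i ≠ 0 := by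
    intro j
    by_contra hcon
    push_neg at hcon
    have h := hnorm j
    rw [Finset.sum_eq_zero (fun i _ => by rw [hcon i, zero_mul])] at h
    exact one_ne_zero h.symm
  have hc : ∀ j k, j ≠ k → ∑ m, star (v j m) * v k m = 0 := by
    intro j k hjk
    obtain ⟨i0, hi0⟩ := hvne j
    obtain ⟨l0, hl0⟩ := hvne k
    have h0 := horth j k hjk
    rw [hv j, hv k] at h0
    have h1 := congrFun (congrFun h0 i0) l0
    have h2 : (Matrix.vecMulVec (v j) (star (v j)) * Matrix.vecMulVec (v k) (star (v k))) i0 l0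
        = v j i0 * star (v k l0) * ∑ m, star (v j m) * v k m := by
      rw [Matrix.mul_apply, Finset.mul_sum]
      refine Finset.sum_congr rfl fun m _ => ?_
      simp only [Matrix.vecMulVec_apply, Pi.star_apply]
      ring
    rw [h2] at h1
    have h3 : (0 : Mat d) i0 l0 = 0 := rfl
    rw [h3] at h1
    rcases mul_eq_zero.1 h1 with h|h
    · rcases mul_eq_zero.1 h with h'|h'
      · exact absurd h' hi0
      · exact absurd (star_eq_zero.1 h') hl0
    · exact h
  set V : Mat d := Matrix.of (fun i j => v j i) with hVdef
  have hVV : Vᴴ * V = 1 := by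
    ext j k
    rw [Matrix.mul_apply]
    have hentry : ∀ i, Vᴴ j i * V i k = star (v j i) * v k i := by
      intro i
      rw [Matrix.conjTranspose_apply]
      rfl
    rw [Finset.sum_congr rfl fun i _ => hentry i]
    by_cases h : j = k
    · subst h
      rw [Matrix.one_apply_eq]
      rw [Finset.sum_congr rfl fun i (_ : i ∈ Finset.univ) => mul_comm (star (v j i)) (v j i)]
      exact hnorm j
    · rw [Matrix.one_apply_ne h]
      exact hc j k h
  have hρdiagV : ρ = V * Matrix.diagonal (fun j => (R j : ℂ)) * Vᴴ := by
    rw [hρeq]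
    ext i l
    rw [Matrix.mul_apply, Matrix.sum_apply]
    refine Finset.sum_congr rfl fun j _ => ?_
    rw [Matrix.mul_diagonal, Matrix.conjTranspose_apply, Matrix.smul_apply, hv j]
    simp only [Matrix.vecMulVec_apply, Pi.star_apply, smul_eq_mul]
    show (R j : ℂ) * (v j i * star (v j l)) = V i j * (R j : ℂ) * star (V l j)
    show (R j : ℂ) * (v j i * star (v j l)) = v j i * (R j : ℂ) * star (v j l)
    ring
  have hvn : vnEntropy ρ = -∑ j, R j * Real.logb 2 (R j) := by
    rw [vnEntropy, dif_pos hherm]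
    exact congrArg Neg.neg
      (sum_f_eigenvalues ρ hherm R V hVV hρdiagV (fun x => x * Real.logb 2 x))
  have hsand := sandwich_eq (n := n) R π hidem horth δ
  rw [← hρeq] at hsand
  have hPpsd : ∀ js : Fin n → Fin d, (tensorPow fun i => π (js i)).PosSemidef := by
    intro js
    have h1 : (tensorPow fun i => π (js i))ᴴ = tensorPow fun i => π (js i) := by
      rw [tensorPow_conjTranspose]
      exact congrArg tensorPow (funext fun i => (hπpsd (js i)).1)
    have h2 : (tensorPow fun i => π (js i)) * (tensorPow fun i => π (js i))
        = tensorPow fun i => π (js i) := by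
      rw [tensorPow_mul]
      exact congrArg tensorPow (funext fun i => hidem (js i))
    have h3 : (tensorPow fun i => π (js i))
        = (tensorPow fun i => π (js i))ᴴ * (tensorPow fun i => π (js i)) := by
      rw [h1, h2]
    rw [h3]
    exact Matrix.posSemidef_conjTranspose_mul_self _
  rw [hvn]
  constructor
  · rw [hsand, typicalProj, Finset.smul_sum, ← Finset.sum_sub_distrib]
    apply psd_sum
    intro js hjs
    have heq : ((∏ i, R (js i) : ℝ) : ℂ) • (tensorPow fun i => π (js i))
        - ((exp2 (-((n : ℝ) * (-∑ j, R j * Real.logb 2 (R j)))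
              - Kconst * d * δ * Real.sqrt n) : ℝ) : ℂ) • (tensorPow fun i => π (js i))
        = ((((∏ i, R (js i)) - exp2 (-((n : ℝ) * (-∑ j, R j * Real.logb 2 (R j)))
              - Kconst * d * δ * Real.sqrt n) : ℝ)) : ℂ) • (tensorPow fun i => π (js i)) := by
      rw [← sub_smul]
      norm_cast
    rw [heq]
    exact psd_smul (hPpsd js) (sub_nonneg.2 (prod_bound hprob hδ hjs).1)
  · rw [hsand, typicalProj, Finset.smul_sum, ← Finset.sum_sub_distrib]
    apply psd_sum
    intro js hjs
    have heq : ((exp2 (-((n : ℝ) * (-∑ j, R j * Real.logb 2 (R j)))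
              + Kconst * d * δ * Real.sqrt n) : ℝ) : ℂ) • (tensorPow fun i => π (js i))
        - ((∏ i, R (js i) : ℝ) : ℂ) • (tensorPow fun i => π (js i))
        = (((exp2 (-((n : ℝ) * (-∑ j, R j * Real.logb 2 (R j)))
              + Kconst * d * δ * Real.sqrt n) - (∏ i, R (js i)) : ℝ)) : ℂ)
            • (tensorPow fun i => π (js i)) := by
      rw [← sub_smul]
      norm_cast
    rw [heq]
    exact psd_smul (hPpsd js) (sub_nonneg.2 (prod_bound hprob hδ hjs).2)
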